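/- Let f ∈ W(ℝ, ℝ) be equi-Weyl almost periodic. Then for any a ∈ ℝ and ε > 0 there exists a measurable set T ⊆ ℝ whose characteristic function χ_T belongs to W₁(ℝ, ℝ), such that f(t) < a + ε for all t ∈ T and f(t) > a for almost every t ∈ ℝ \ T. -/

import Mathlib

open MeasureTheory Filter Set intervalIntegral

/-- A set `T ⊆ ℝ` is relatively dense. -/
def RelDense (T : Set ℝ) : Prop :=
  ∃ a > (0 : ℝ), ∀ ξ : ℝ, ∃ τ ∈ T, ξ ≤ τ ∧ τ ≤ ξ + a

namespace Stmt11Aux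

lemma intInt {h : ℝ → ℝ} (hm : AEStronglyMeasurable h volume) {M : ℝ}
    (hb : ∀ t, |h t| ≤ M) (x y : ℝ) : IntervalIntegrable h volume x y :=
  (_root_.intervalIntegrable_const (c := M)).mono_fun' hm.restrict
    (Filter.Eventually.of_forall (fun t => by simpa using hb t))

lemma shift_aesm {h : ℝ → ℝ} (hm : AEStronglyMeasurable h volume) (τ : ℝ) :
    AEStronglyMeasurable (fun t => h (t + τ)) volume :=
  hm.comp_quasiMeasurePreserving
    (measurePreserving_add_right volume τ).quasiMeasurePreserving

lemma m_aesm {f : ℝ → ℝ} (hm : AEStronglyMeasurable f volume) (τ : ℝ) :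
    AEStronglyMeasurable (fun t => min 1 |f t - f (t + τ)|) volume := by
  have h1 : AEMeasurable (fun t => |f t - f (t + τ)|) volume :=
    measurable_abs.comp_aemeasurable
      (hm.aemeasurable.sub (shift_aesm hm τ).aemeasurable)
  exact (aemeasurable_const.min h1).aestronglyMeasurable

lemma m_bound {f : ℝ → ℝ} (τ t : ℝ) : |min 1 (|f t - f (t + τ)|)| ≤ 1 := by
  rw [abs_of_nonneg (le_min zero_le_one (abs_nonneg _))]
  exact min_le_left _ _


/-- From a sup bound at scale `l₁`, an average bound at any larger scale. -/
lemma window_bound {h : ℝ → ℝ} (hm : AEStronglyMeasurable h volume)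
    (h0 : ∀ t, 0 ≤ h t) (h1 : ∀ t, h t ≤ 1) {l₁ θ : ℝ} (hl₁ : 0 < l₁) (hθ : 0 ≤ θ)
    (hsup : ∀ ξ : ℝ, (∫ t in ξ..(ξ + l₁), h t) ≤ θ * l₁)
    {l : ℝ} (hl : l₁ ≤ l) (ξ : ℝ) :
    (∫ t in ξ..(ξ + l), h t) ≤ 2 * θ * l := by
  have hb : ∀ t, |h t| ≤ 1 := fun t => abs_le.2 ⟨by linarith [h0 t], h1 t⟩
  have hii : ∀ x y : ℝ, IntervalIntegrable h volume x y := intInt hm hb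
  have hlpos : 0 < l := lt_of_lt_of_le hl₁ hl
  set n : ℕ := ⌈l / l₁⌉₊ with hn
  have hn1 : l ≤ (n : ℝ) * l₁ := by
    rw [hn]
    have := Nat.le_ceil (l / l₁)
    calc l = l / l₁ * l₁ := by field_simp
    _ ≤ (⌈l / l₁⌉₊ : ℝ) * l₁ := by
        exact mul_le_mul_of_nonneg_right this hl₁.le
  have hn2 : (n : ℝ) * l₁ ≤ 2 * l := by
    have h2 : (n : ℝ) < l / l₁ + 1 := Nat.ceil_lt_add_one (by positivity)
    have : (n : ℝ) * l₁ < (l / l₁ + 1) * l₁ := by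
      exact mul_lt_mul_of_pos_right h2 hl₁
    have hq : (l / l₁ + 1) * l₁ = l + l₁ := by field_simp
    nlinarith
  have key : (∫ t in ξ..(ξ + (n : ℝ) * l₁), h t)
      = ∑ j ∈ Finset.range n, ∫ t in (ξ + (j : ℝ) * l₁)..(ξ + ((j : ℝ) + 1) * l₁), h t := by
    have := intervalIntegral.sum_integral_adjacent_intervals
      (a := fun j : ℕ => ξ + (j : ℝ) * l₁) (n := n) (μ := volume) (f := h)
      (fun k _ => hii _ _)
    simp only [Nat.cast_zero, zero_mul, add_zero] at this
    rw [← this]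
    congr 1
    ext j
    congr 1
    push_cast
    ring
  have hstep : ∀ j : ℕ, (∫ t in (ξ + (j : ℝ) * l₁)..(ξ + ((j : ℝ) + 1) * l₁), h t) ≤ θ * l₁ := by
    intro j
    have := hsup (ξ + (j : ℝ) * l₁)
    have harg : ξ + (j : ℝ) * l₁ + l₁ = ξ + ((j : ℝ) + 1) * l₁ := by ring
    rwa [harg] at this
  calc (∫ t in ξ..(ξ + l), h t) ≤ ∫ t in ξ..(ξ + (n : ℝ) * l₁), h t := by
        refine intervalIntegral.integral_mono_interval le_rfl (by linarith) (by linarith)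
          (Filter.Eventually.of_forall (fun t => h0 t)) (hii _ _)
  _ = ∑ j ∈ Finset.range n, ∫ t in (ξ + (j : ℝ) * l₁)..(ξ + ((j : ℝ) + 1) * l₁), h t := key
  _ ≤ ∑ j ∈ Finset.range n, θ * l₁ := Finset.sum_le_sum (fun j _ => hstep j)
  _ = (n : ℝ) * (θ * l₁) := by rw [Finset.sum_const, Finset.card_range]; simp [nsmul_eq_mul]
  _ ≤ 2 * θ * l := by nlinarith [hθ, hl₁.le]

noncomputable def bandInd (g : ℝ → ℝ) (c δ t : ℝ) : ℝ :=
  Set.indicator {x | |g x - c| < δ} (fun _ => (1:ℝ)) t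

lemma bandInd_nonneg (g : ℝ → ℝ) (c δ t : ℝ) : 0 ≤ bandInd g c δ t :=
  Set.indicator_nonneg (fun _ _ => zero_le_one) t

lemma bandInd_le_one (g : ℝ → ℝ) (c δ t : ℝ) : bandInd g c δ t ≤ 1 := by
  unfold bandInd; by_cases h : t ∈ {x | |g x - c| < δ} <;>
    simp [Set.indicator_of_mem, Set.indicator_of_notMem, h]

lemma bandInd_abs (g : ℝ → ℝ) (c δ t : ℝ) : |bandInd g c δ t| ≤ 1 := by
  rw [abs_of_nonneg (bandInd_nonneg g c δ t)]; exact bandInd_le_one g c δ t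

lemma bandInd_meas {g : ℝ → ℝ} (hg : Measurable g) (c δ : ℝ) :
    Measurable (bandInd g c δ) := by
  apply Measurable.indicator measurable_const
  have : {x | |g x - c| < δ} = (fun x => |g x - c|) ⁻¹' (Set.Iio δ) := rfl
  rw [this]
  exact ((hg.sub measurable_const).abs) measurableSet_Iio

lemma bandInd_eq_one {g : ℝ → ℝ} {c δ t : ℝ} (h : |g t - c| < δ) :
    bandInd g c δ t = 1 :=
  Set.indicator_of_mem (show t ∈ {x | |g x - c| < δ} from h) _

lemma bandInd_pos_iff {g : ℝ → ℝ} {c δ t : ℝ} (h : ¬ |g t - c| < δ) :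
    bandInd g c δ t = 0 :=
  Set.indicator_of_notMem (show t ∉ {x | |g x - c| < δ} from h) _

lemma exists_good_level {g : ℝ → ℝ} (hg : Measurable g) (a ε : ℝ) (hε : 0 < ε) :
    ∃ c : ℝ, a < c ∧ c < a + ε ∧ ∀ η > (0:ℝ), ∃ δ > (0:ℝ), ∃ᶠ s in atTop,
      (∫ t in (0:ℝ)..s, bandInd g c δ t) ≤ η * s := by
  set u : ℝ → ℝ → ℝ → ℝ := fun c δ s => ∫ t in (0:ℝ)..s, bandInd g c δ t with hu
  set BadN : ℕ → Set ℝ := fun n => {c | ∀ δ > (0:ℝ), ∀ᶠ s in atTop, s / (n+1) < u c δ s}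
    with hBadN
  have hfin : ∀ n, (BadN n).Finite := by
    intro n
    by_contra hinf
    have hinf2 : (BadN n).Infinite := hinf
    obtain ⟨t0, ht0sub, ht0fin, ht0card⟩ := hinf2.exists_subset_ncard_eq (n+2)
    set t : Finset ℝ := ht0fin.toFinset with ht
    have htcard : t.card = n + 2 := by
      rw [ht, ← Set.ncard_eq_toFinset_card t0 ht0fin]; exact ht0card
    have htsub : ∀ c ∈ t, c ∈ BadN n := by
      intro c hc
      exact ht0sub (by rwa [ht, Set.Finite.mem_toFinset] at hc)
    -- minimal gap
    have hgap : ∃ δ0 > (0:ℝ), ∀ c ∈ t, ∀ c' ∈ t, c ≠ c' → δ0 ≤ |c - c'| := by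
      set D : Finset ℝ :=
        ((t ×ˢ t).filter (fun p => p.1 < p.2)).image (fun p => p.2 - p.1) with hD
      have hDne : D.Nonempty := by
        obtain ⟨x, hx, y, hy, hxy⟩ := Finset.one_lt_card.mp (by omega : 1 < t.card)
        rcases lt_or_gt_of_ne hxy with h | h
        · exact ⟨y - x, Finset.mem_image.2 ⟨(x, y), Finset.mem_filter.2
            ⟨Finset.mem_product.2 ⟨hx, hy⟩, h⟩, rfl⟩⟩
        · exact ⟨x - y, Finset.mem_image.2 ⟨(y, x), Finset.mem_filter.2
            ⟨Finset.mem_product.2 ⟨hy, hx⟩, h⟩, rfl⟩⟩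
      refine ⟨D.min' hDne, ?_, ?_⟩
      · have hmem := D.min'_mem hDne
        obtain ⟨p, hp, hpe⟩ := Finset.mem_image.mp hmem
        have := (Finset.mem_filter.mp hp).2
        rw [← hpe]; linarith
      · intro c hc c' hc' hne
        rcases lt_or_gt_of_ne hne with h | h
        · have : c' - c ∈ D := Finset.mem_image.2 ⟨(c, c'), Finset.mem_filter.2
            ⟨Finset.mem_product.2 ⟨hc, hc'⟩, h⟩, rfl⟩
          have := D.min'_le _ this
          rw [abs_sub_comm, abs_of_pos (by linarith)]; linarith
        · have : c - c' ∈ D := Finset.mem_image.2 ⟨(c', c), Finset.mem_filter.2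
            ⟨Finset.mem_product.2 ⟨hc', hc⟩, h⟩, rfl⟩
          have := D.min'_le _ this
          rw [abs_of_pos (by linarith)]; linarith
    obtain ⟨δ0, hδ0, hgap⟩ := hgap
    set δ := δ0 / 2 with hδ
    have hδpos : 0 < δ := by positivity
    have hall : ∀ᶠ s in atTop, ∀ c ∈ t, s / (n+1) < u c δ s :=
      (Filter.eventually_all_finset t).2 (fun c hc => (htsub c hc) δ hδpos)
    obtain ⟨s, hs, hspos⟩ := (hall.and (Filter.eventually_gt_atTop 0)).exists
    -- pointwise disjointness
    have key : ∀ x : ℝ, (∑ c ∈ t, bandInd g c δ x) ≤ 1 := by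
      intro x
      by_cases hex : ∃ c₀ ∈ t, |g x - c₀| < δ
      · obtain ⟨c₀, hc₀, hx₀⟩ := hex
        have : (∑ c ∈ t, bandInd g c δ x) = bandInd g c₀ δ x := by
          apply Finset.sum_eq_single_of_mem c₀ hc₀
          intro b hb hbne
          apply bandInd_pos_iff
          intro hbx
          have h1 := hgap b hb c₀ hc₀ hbne
          have h2 : |b - c₀| ≤ |g x - c₀| + |g x - b| := by
            have := abs_sub_abs_le_abs_sub (g x - c₀) (g x - b)
            have h3 : |(g x - c₀) - (g x - b)| = |b - c₀| := by
              rw [show (g x - c₀) - (g x - b) = b - c₀ by ring]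
            calc |b - c₀| = |(g x - c₀) - (g x - b)| := h3.symm
            _ ≤ |g x - c₀| + |g x - b| := abs_sub _ _
          linarith
        rw [this]; exact bandInd_le_one g c₀ δ x
      · push_neg at hex
        rw [Finset.sum_eq_zero (fun c hc => bandInd_pos_iff (by
          intro h; exact absurd h (not_lt.2 (hex c hc))))]
        norm_num
    -- sum of integrals
    have hii : ∀ c δ' x y, IntervalIntegrable (bandInd g c δ') volume x y :=
      fun c δ' x y => intInt (bandInd_meas hg c δ').aestronglyMeasurable
        (bandInd_abs g c δ') x y
    have hsum : (∑ c ∈ t, u c δ s) ≤ s := by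
      have key' : (∑ i ∈ t, bandInd g i δ) ≤ (fun _ => (1:ℝ)) := by
        intro x; simpa using key x
      have h1 : (∫ x in (0:ℝ)..s, (∑ i ∈ t, bandInd g i δ) x)
          ≤ ∫ _ in (0:ℝ)..s, (1:ℝ) :=
        intervalIntegral.integral_mono hspos.le
          (IntervalIntegrable.sum t (fun c _ => hii c δ 0 s))
          _root_.intervalIntegrable_const key'
      have h2 : (∫ x in (0:ℝ)..s, (∑ i ∈ t, bandInd g i δ) x) = ∑ c ∈ t, u c δ s := by
        simp only [Finset.sum_apply]
        exact intervalIntegral.integral_finset_sum (fun c _ => hii c δ 0 s)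
      calc (∑ c ∈ t, u c δ s) = ∫ x in (0:ℝ)..s, (∑ i ∈ t, bandInd g i δ) x := h2.symm
      _ ≤ ∫ _ in (0:ℝ)..s, (1:ℝ) := h1
      _ = s := by simp
    have hlow : (t.card : ℝ) * (s / (n+1)) < ∑ c ∈ t, u c δ s := by
      have hne : t.Nonempty := Finset.card_pos.mp (by omega)
      have h := Finset.sum_lt_sum_of_nonempty hne (fun c hc => hs c hc)
      rwa [Finset.sum_const, nsmul_eq_mul] at h
    rw [htcard] at hlow
    push_cast at hlow
    have hq : 0 < s / ((n:ℝ)+1) := div_pos hspos (by positivity)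
    have hid : s = (s / ((n:ℝ)+1)) * ((n:ℝ)+1) := by field_simp
    nlinarith
  have hBadMeas : volume (⋃ n, BadN n) = 0 :=
    (Set.countable_iUnion (fun n => (hfin n).countable)).measure_zero _
  have hIoo : ¬ (Set.Ioo a (a+ε) ⊆ ⋃ n, BadN n) := by
    intro hsub
    have h1 := measure_mono (μ := volume) hsub
    rw [hBadMeas, Real.volume_Ioo] at h1
    simp only [nonpos_iff_eq_zero, ENNReal.ofReal_eq_zero] at h1
    linarith
  obtain ⟨c, hcIoo, hcBad⟩ := Set.not_subset.mp hIoo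
  refine ⟨c, hcIoo.1, hcIoo.2, ?_⟩
  intro η hη
  obtain ⟨n, hn⟩ := exists_nat_one_div_lt hη
  have hc : c ∉ BadN n := fun h => hcBad (Set.mem_iUnion.2 ⟨n, h⟩)
  rw [hBadN] at hc
  simp only [Set.mem_setOf_eq] at hc
  push_neg at hc
  obtain ⟨δ, hδpos, hδ⟩ := hc
  simp only [← not_lt] at hδ
  refine ⟨δ, hδpos, ?_⟩
  have := hδ.and_eventually (Filter.eventually_ge_atTop (0:ℝ))
  apply this.mono
  rintro s ⟨h1, h2⟩
  rw [not_lt] at h1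
  calc u c δ s ≤ s / (n+1) := h1
  _ = (1 / ((n:ℝ)+1)) * s := by ring
  _ ≤ η * s := mul_le_mul_of_nonneg_right hn.le h2

lemma relDense_mono {S S' : Set ℝ} (h : S ⊆ S') : RelDense S → RelDense S' := by
  rintro ⟨a, ha, hS⟩
  exact ⟨a, ha, fun ξ => by obtain ⟨τ, hτ, h1, h2⟩ := hS ξ; exact ⟨τ, h hτ, h1, h2⟩⟩

end Stmt11Aux

/-- `f ∈ W(ℝ,ℝ)`: equi-Weyl a.p. w.r.t. the truncated metric `min 1 |x−y|`. -/
def WAPr (f : ℝ → ℝ) : Prop :=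
  AEStronglyMeasurable f volume ∧
    ∀ ε > (0 : ℝ), ∃ l > (0 : ℝ), RelDense {τ : ℝ |
      (⨆ ξ : ℝ, (1 / l) * ∫ t in ξ..(ξ + l), min 1 |f t - f (t + τ)|) < ε}

/-- `f ∈ W₁(ℝ,ℝ)`: equi-Weyl a.p. of degree 1. -/
def W1APr (f : ℝ → ℝ) : Prop :=
  AEStronglyMeasurable f volume ∧
    (∃ C : ℝ, ∀ ξ : ℝ, (∫ t in ξ..(ξ + 1), |f t|) ≤ C) ∧
    ∀ ε > (0 : ℝ), ∃ l > (0 : ℝ), RelDense {τ : ℝ |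
      (⨆ ξ : ℝ, (1 / l) * ∫ t in ξ..(ξ + l), |f t - f (t + τ)|) < ε}

open Stmt11Aux

theorem stmt11 (f : ℝ → ℝ) (hf : WAPr f) (a ε : ℝ) (hε : 0 < ε) :
    ∃ T : Set ℝ, MeasurableSet T ∧
      W1APr (T.indicator fun _ => (1 : ℝ)) ∧
      (∀ t ∈ T, f t < a + ε) ∧
      (∀ᵐ t : ℝ, t ∉ T → a < f t) := by
  classical
  obtain ⟨hfm, hap⟩ := hf
  set g : ℝ → ℝ := hfm.mk f with hgdef
  have hgm : Measurable g := hfm.stronglyMeasurable_mk.measurable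
  have hfg : f =ᵐ[volume] g := hfm.ae_eq_mk
  set N : Set ℝ := toMeasurable volume {t | ¬ f t = g t} with hNdef
  have hNmeas : MeasurableSet N := measurableSet_toMeasurable _ _
  have hNnull : volume N = 0 := by
    rw [hNdef, measure_toMeasurable]
    exact ae_iff.mp hfg
  have hNsub : ∀ t, t ∉ N → f t = g t := by
    intro t ht
    by_contra hne
    exact ht (subset_toMeasurable _ _ hne)
  have hNae : ∀ᵐ t : ℝ, t ∉ N := by
    rw [ae_iff]
    simpa using hNnull
  have hNshift : ∀ σ : ℝ, ∀ᵐ t : ℝ, (t + σ) ∉ N := by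
    intro σ
    have h0 : volume ((fun t : ℝ => t + σ) ⁻¹' N) = 0 := by
      rw [(measurePreserving_add_right volume σ).measure_preimage
        hNmeas.nullMeasurableSet]
      exact hNnull
    rw [ae_iff]
    refine measure_mono_null ?_ h0
    intro t ht
    simpa using ht
  have hshift : ∀ σ : ℝ, ∀ᵐ t : ℝ, f (t + σ) = g (t + σ) := by
    intro σ
    filter_upwards [hNshift σ] with t ht
    exact hNsub _ ht
  obtain ⟨c, hac, hca, hfreq⟩ := Stmt11Aux.exists_good_level hgm a ε hε
  set T : Set ℝ := {t | g t < c} \ N with hTdef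
  have hTmeas : MeasurableSet T := (measurableSet_lt hgm measurable_const).diff hNmeas
  set χ : ℝ → ℝ := T.indicator (fun _ => (1:ℝ)) with hχdef
  have hχmeas : Measurable χ := measurable_const.indicator hTmeas
  have hχ0 : ∀ t, 0 ≤ χ t := fun t => Set.indicator_nonneg (fun _ _ => zero_le_one) t
  have hχ1 : ∀ t, χ t ≤ 1 := by
    intro t
    rw [hχdef]
    by_cases h : t ∈ T <;> simp [Set.indicator_of_mem, Set.indicator_of_notMem, h]
  have hχT : ∀ t, t ∉ N → (χ t = if g t < c then 1 else 0) := by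
    intro t ht
    rw [hχdef]
    by_cases h : g t < c
    · rw [if_pos h]
      exact Set.indicator_of_mem (show t ∈ T from ⟨h, ht⟩) _
    · rw [if_neg h]
      exact Set.indicator_of_notMem (fun hmem => h hmem.1) _
  -- interval integrability of everything we need
  have hχd_ii : ∀ (τ x y : ℝ),
      IntervalIntegrable (fun t => |χ t - χ (t + τ)|) volume x y := by
    intro τ x y
    refine intInt (Measurable.aestronglyMeasurable ?_) (M := 1) (fun t => ?_) x y
    · exact (hχmeas.sub (hχmeas.comp (measurable_add_const τ))).abs
    · rw [abs_abs, abs_sub_le_iff]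
      exact ⟨by have := hχ0 (t+τ); have := hχ1 t; linarith,
             by have := hχ0 t; have := hχ1 (t+τ); linarith⟩
  have hm_ii : ∀ (τ x y : ℝ),
      IntervalIntegrable (fun t => min 1 |f t - f (t + τ)|) volume x y :=
    fun τ x y => intInt (m_aesm hfm τ) (m_bound (f := f) τ) x y
  have hband_ii : ∀ (c' δ' x y : ℝ),
      IntervalIntegrable (bandInd g c' δ') volume x y :=
    fun c' δ' x y => intInt (bandInd_meas hgm c' δ').aestronglyMeasurable
      (bandInd_abs g c' δ') x y
  have hbandsh_ii : ∀ (c' δ' σ x y : ℝ),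
      IntervalIntegrable (fun t => bandInd g c' δ' (t + σ)) volume x y :=
    fun c' δ' σ x y => intInt
      (((bandInd_meas hgm c' δ').comp (measurable_add_const σ)).aestronglyMeasurable)
      (fun t => bandInd_abs g c' δ' (t + σ)) x y
  refine ⟨T, hTmeas, ⟨hχmeas.aestronglyMeasurable, ⟨1, ?_⟩, ?_⟩, ?_, ?_⟩
  · -- mean boundedness
    intro ξ
    have h1 : (∫ t in ξ..(ξ+1), |χ t|) ≤ ∫ _ in ξ..(ξ+1), (1:ℝ) := by
      apply intervalIntegral.integral_mono (by linarith)
        (intInt hχmeas.abs.aestronglyMeasurable (M := 1)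
          (fun t => by rw [abs_abs, abs_of_nonneg (hχ0 t)]; exact hχ1 t) _ _)
        _root_.intervalIntegrable_const
      exact fun t => by simpa [abs_of_nonneg (hχ0 t)] using hχ1 t
    have h2 : (∫ _ in ξ..(ξ+1), (1:ℝ)) = 1 := by
      rw [intervalIntegral.integral_const, smul_eq_mul]; ring
    linarith [h1, h2]
  · -- main almost periodicity statement
    intro ε₂ hε₂
    have hη : (0:ℝ) < ε₂/16 := by positivity
    obtain ⟨δ0, hδ0, hfreq'⟩ := hfreq (ε₂/16) hη
    set δ : ℝ := δ0/2 with hδdef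
    have hδpos : 0 < δ := by positivity
    have hminpos : 0 < min 1 δ := lt_min one_pos hδpos
    set K : ℝ := 1 / min 1 δ with hKdef
    have hKpos : 0 < K := by positivity
    have hKmin : K * min 1 δ = 1 := by
      rw [hKdef]; field_simp
    set θ : ℝ := (ε₂/16) * min 1 δ with hθdef
    have hθpos : 0 < θ := by positivity
    have hKθ : K * θ = ε₂/16 := by
      have h : K * ((ε₂/16) * min 1 δ) = (ε₂/16) * (K * min 1 δ) := by ring
      rw [hθdef, h, hKmin, mul_one]
    obtain ⟨l₁, hl₁, hRD⟩ := hap θ hθpos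
    obtain ⟨L, hLpos, hL⟩ := hRD
    set S : Set ℝ := {τ : ℝ |
      (⨆ ξ : ℝ, (1 / l₁) * ∫ t in ξ..(ξ + l₁), min 1 |f t - f (t + τ)|) < θ} with hSdef
    -- pointwise bound from the sup
    have hsup_pt : ∀ τ ∈ S, ∀ ξ : ℝ,
        (∫ t in ξ..(ξ + l₁), min 1 |f t - f (t + τ)|) ≤ θ * l₁ := by
      intro τ hτ ξ
      have hub : ∀ ξ' : ℝ,
          (∫ t in ξ'..(ξ' + l₁), min 1 |f t - f (t + τ)|) ≤ l₁ := by
        intro ξ'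
        have hle : (∫ t in ξ'..(ξ' + l₁), min 1 |f t - f (t + τ)|)
            ≤ ∫ _ in ξ'..(ξ' + l₁), (1:ℝ) :=
          intervalIntegral.integral_mono (by linarith) (hm_ii τ _ _)
            _root_.intervalIntegrable_const (fun t => min_le_left _ _)
        have he : (∫ _ in ξ'..(ξ' + l₁), (1:ℝ)) = l₁ := by
          rw [intervalIntegral.integral_const, smul_eq_mul]; ring
        rw [he] at hle; exact hle
      have hbdd : BddAbove (Set.range fun ξ' : ℝ =>
          (1 / l₁) * ∫ t in ξ'..(ξ' + l₁), min 1 |f t - f (t + τ)|) := by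
        refine ⟨1, ?_⟩
        rintro x ⟨ξ', rfl⟩
        dsimp only
        rw [div_mul_eq_mul_div, one_mul, div_le_one hl₁]
        exact hub ξ'
      have h1 : (1 / l₁) * (∫ t in ξ..(ξ + l₁), min 1 |f t - f (t + τ)|) < θ :=
        lt_of_le_of_lt (le_ciSup hbdd ξ) hτ
      have h2 : (∫ t in ξ..(ξ + l₁), min 1 |f t - f (t + τ)|)
          = l₁ * ((1 / l₁) * ∫ t in ξ..(ξ + l₁), min 1 |f t - f (t + τ)|) := by
        field_simp
      rw [h2]
      calc l₁ * ((1 / l₁) * ∫ t in ξ..(ξ + l₁), min 1 |f t - f (t + τ)|)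
          ≤ l₁ * θ := mul_le_mul_of_nonneg_left h1.le hl₁.le
      _ = θ * l₁ := by ring
    -- choose the scale
    obtain ⟨s, hsge, hsu⟩ := Filter.frequently_atTop.mp hfreq' (max (2*L) (2*l₁) + 1)
    set l : ℝ := s - L with hldef
    have h2L : 2*L ≤ s := le_trans (le_max_left _ _) (by linarith)
    have h2l₁ : 2*l₁ ≤ s := le_trans (le_max_right _ _) (by linarith)
    have hLl₁ : L + l₁ ≤ s := by
      rcases le_total L l₁ with h | h
      · linarith
      · linarith
    have hlpos : 0 < l := by rw [hldef]; linarith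
    have hl₁l : l₁ ≤ l := by rw [hldef]; linarith
    have hLl : L ≤ l := by rw [hldef]; linarith
    have hsLl : s = L + l := by rw [hldef]; ring
    have hs2l : s ≤ 2*l := by rw [hldef]; linarith
    -- average bound at scale l
    have havg : ∀ τ ∈ S, ∀ ξ : ℝ,
        (∫ t in ξ..(ξ + l), min 1 |f t - f (t + τ)|) ≤ 2 * θ * l := by
      intro τ hτ ξ
      exact window_bound (m_aesm hfm τ)
        (fun t => le_min zero_le_one (abs_nonneg _)) (fun t => min_le_left _ _)
        hl₁ hθpos.le (hsup_pt τ hτ) hl₁l ξ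
    -- band bound at scale l, uniform in the window position
    have hband : ∀ ζ : ℝ, (∫ t in ζ..(ζ + l), bandInd g c δ t) ≤ (ε₂/4) * l := by
      intro ζ
      obtain ⟨σ, hσS, hσ1, hσ2⟩ := hL (-ζ)
      have hptwise : ∀ᵐ t : ℝ, bandInd g c δ t
          ≤ bandInd g c δ0 (t + σ) + K * min 1 |f t - f (t + σ)| := by
        filter_upwards [hfg, hshift σ] with t h1 h2
        by_cases hb : |g t - c| < δ
        · by_cases hb2 : |g (t + σ) - c| < δ0
          · rw [bandInd_eq_one hb, bandInd_eq_one hb2]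
            have : 0 ≤ K * min 1 |f t - f (t + σ)| :=
              mul_nonneg hKpos.le (le_min zero_le_one (abs_nonneg _))
            linarith
          · have hdist : δ ≤ |g t - g (t + σ)| := by
              rw [not_lt] at hb2
              have h3 : |g (t + σ) - c| ≤ |g t - c| + |g t - g (t + σ)| := by
                calc |g (t + σ) - c| = |(g t - c) - (g t - g (t + σ))| := by ring_nf
                _ ≤ |g t - c| + |g t - g (t + σ)| := abs_sub _ _
              rw [hδdef] at hb ⊢
              linarith
            have hmge : min 1 δ ≤ min 1 |f t - f (t + σ)| := by
              rw [h1, h2]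
              exact min_le_min le_rfl hdist
            have h5 : 1 ≤ K * min 1 |f t - f (t + σ)| := by
              calc (1:ℝ) = K * min 1 δ := hKmin.symm
              _ ≤ K * min 1 |f t - f (t + σ)| :=
                  mul_le_mul_of_nonneg_left hmge hKpos.le
            have h4 := bandInd_nonneg g c δ0 (t + σ)
            rw [bandInd_eq_one hb]
            linarith
        · rw [bandInd_pos_iff hb]
          have h4 := bandInd_nonneg g c δ0 (t + σ)
          have : 0 ≤ K * min 1 |f t - f (t + σ)| :=
            mul_nonneg hKpos.le (le_min zero_le_one (abs_nonneg _))
          linarith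
      have hint : (∫ t in ζ..(ζ + l), bandInd g c δ t)
          ≤ (∫ t in ζ..(ζ + l),
              (bandInd g c δ0 (t + σ) + K * min 1 |f t - f (t + σ)|)) :=
        intervalIntegral.integral_mono_ae (by linarith) (hband_ii c δ ζ (ζ + l))
          ((hbandsh_ii c δ0 σ ζ (ζ + l)).add
            ((hm_ii σ ζ (ζ + l)).const_mul K)) hptwise
      have hsplit : (∫ t in ζ..(ζ + l),
            (bandInd g c δ0 (t + σ) + K * min 1 |f t - f (t + σ)|))
          = (∫ t in ζ..(ζ + l), bandInd g c δ0 (t + σ))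
            + K * ∫ t in ζ..(ζ + l), min 1 |f t - f (t + σ)| := by
        rw [intervalIntegral.integral_add (hbandsh_ii c δ0 σ ζ (ζ + l))
          ((hm_ii σ ζ (ζ + l)).const_mul K)]
        congr 1
        exact intervalIntegral.integral_const_mul K _
      have hfirst : (∫ t in ζ..(ζ + l), bandInd g c δ0 (t + σ)) ≤ (ε₂/8) * l := by
        have hcomp : (∫ t in ζ..(ζ + l), bandInd g c δ0 (t + σ))
            = ∫ t in (ζ + σ)..(ζ + σ + l), bandInd g c δ0 t := by
          rw [intervalIntegral.integral_comp_add_right]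
          congr 1
          ring
        rw [hcomp]
        have hmono : (∫ t in (ζ + σ)..(ζ + σ + l), bandInd g c δ0 t)
            ≤ ∫ t in (0:ℝ)..s, bandInd g c δ0 t :=
          intervalIntegral.integral_mono_interval (by linarith) (by linarith)
            (by rw [hsLl]; linarith)
            (Filter.Eventually.of_forall (fun t => bandInd_nonneg g c δ0 t))
            (hband_ii c δ0 0 s)
        calc (∫ t in (ζ + σ)..(ζ + σ + l), bandInd g c δ0 t)
            ≤ ∫ t in (0:ℝ)..s, bandInd g c δ0 t := hmono
        _ ≤ (ε₂/16) * s := hsu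
        _ ≤ (ε₂/16) * (2*l) := mul_le_mul_of_nonneg_left hs2l (by positivity)
        _ = (ε₂/8) * l := by ring
      have hsecond : K * (∫ t in ζ..(ζ + l), min 1 |f t - f (t + σ)|) ≤ (ε₂/8) * l := by
        calc K * (∫ t in ζ..(ζ + l), min 1 |f t - f (t + σ)|)
            ≤ K * (2 * θ * l) :=
              mul_le_mul_of_nonneg_left (havg σ hσS ζ) hKpos.le
        _ = 2 * (K * θ) * l := by ring
        _ = (ε₂/8) * l := by rw [hKθ]; ring
      calc (∫ t in ζ..(ζ + l), bandInd g c δ t)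
          ≤ _ := hint
      _ = _ := hsplit
      _ ≤ (ε₂/8) * l + (ε₂/8) * l := add_le_add hfirst hsecond
      _ = (ε₂/4) * l := by ring
    -- the main estimate
    have hmain : ∀ τ ∈ S, ∀ ξ : ℝ,
        (∫ t in ξ..(ξ + l), |χ t - χ (t + τ)|) ≤ (3*ε₂/4) * l := by
      intro τ hτ ξ
      have hptwise : ∀ᵐ t : ℝ, |χ t - χ (t + τ)|
          ≤ K * min 1 |f t - f (t + τ)| + (bandInd g c δ t + bandInd g c δ (t + τ)) := by
        filter_upwards [hfg, hshift τ, hNae, hNshift τ] with t h1 h2 h3 h4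
        have hχt := hχT t h3
        have hχt2 := hχT (t + τ) h4
        have hm0 : 0 ≤ K * min 1 |f t - f (t + τ)| :=
          mul_nonneg hKpos.le (le_min zero_le_one (abs_nonneg _))
        have hb0 := bandInd_nonneg g c δ t
        have hb02 := bandInd_nonneg g c δ (t + τ)
        rw [hχt, hχt2]
        by_cases hgt : g t < c <;> by_cases hgt2 : g (t + τ) < c
        · rw [if_pos hgt, if_pos hgt2, sub_self, abs_zero]
          linarith
        · rw [if_pos hgt, if_neg hgt2]
          rw [not_lt] at hgt2
          rw [show |(1:ℝ) - 0| = 1 by norm_num]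
          by_cases hd : |g t - g (t + τ)| < δ
          · have hb : |g t - c| < δ := by
              rw [abs_lt] at hd ⊢
              constructor <;> linarith [hd.1, hd.2]
            rw [bandInd_eq_one hb] at hb0 ⊢
            linarith
          · rw [not_lt] at hd
            have hmge : min 1 δ ≤ min 1 |f t - f (t + τ)| := by
              rw [h1, h2]; exact min_le_min le_rfl hd
            have h5 : 1 ≤ K * min 1 |f t - f (t + τ)| := by
              calc (1:ℝ) = K * min 1 δ := hKmin.symm
              _ ≤ _ := mul_le_mul_of_nonneg_left hmge hKpos.le
            linarith
        · rw [if_neg hgt, if_pos hgt2]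
          rw [not_lt] at hgt
          rw [show |(0:ℝ) - 1| = 1 by norm_num]
          by_cases hd : |g t - g (t + τ)| < δ
          · have hb : |g (t + τ) - c| < δ := by
              rw [abs_lt] at hd ⊢
              constructor <;> linarith [hd.1, hd.2]
            rw [bandInd_eq_one hb] at hb02 ⊢
            linarith
          · rw [not_lt] at hd
            have hmge : min 1 δ ≤ min 1 |f t - f (t + τ)| := by
              rw [h1, h2]; exact min_le_min le_rfl hd
            have h5 : 1 ≤ K * min 1 |f t - f (t + τ)| := by
              calc (1:ℝ) = K * min 1 δ := hKmin.symm
              _ ≤ _ := mul_le_mul_of_nonneg_left hmge hKpos.le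
            linarith
        · rw [if_neg hgt, if_neg hgt2, sub_self, abs_zero]
          linarith
      have hint : (∫ t in ξ..(ξ + l), |χ t - χ (t + τ)|)
          ≤ ∫ t in ξ..(ξ + l),
              (K * min 1 |f t - f (t + τ)| + (bandInd g c δ t + bandInd g c δ (t + τ))) :=
        intervalIntegral.integral_mono_ae (by linarith) (hχd_ii τ _ _)
          (((hm_ii τ ξ (ξ + l)).const_mul K).add
            ((hband_ii c δ ξ (ξ + l)).add (hbandsh_ii c δ τ ξ (ξ + l)))) hptwise
      have hsplit : (∫ t in ξ..(ξ + l),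
            (K * min 1 |f t - f (t + τ)| + (bandInd g c δ t + bandInd g c δ (t + τ))))
          = K * (∫ t in ξ..(ξ + l), min 1 |f t - f (t + τ)|)
            + ((∫ t in ξ..(ξ + l), bandInd g c δ t)
              + ∫ t in ξ..(ξ + l), bandInd g c δ (t + τ)) := by
        rw [intervalIntegral.integral_add ((hm_ii τ ξ (ξ + l)).const_mul K)
          ((hband_ii c δ ξ (ξ + l)).add (hbandsh_ii c δ τ ξ (ξ + l))),
          intervalIntegral.integral_add (hband_ii c δ ξ (ξ + l))
            (hbandsh_ii c δ τ ξ (ξ + l)),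
          intervalIntegral.integral_const_mul]
      have hh1 : K * (∫ t in ξ..(ξ + l), min 1 |f t - f (t + τ)|) ≤ (ε₂/8) * l := by
        calc K * (∫ t in ξ..(ξ + l), min 1 |f t - f (t + τ)|)
            ≤ K * (2 * θ * l) := mul_le_mul_of_nonneg_left (havg τ hτ ξ) hKpos.le
        _ = 2 * (K * θ) * l := by ring
        _ = (ε₂/8) * l := by rw [hKθ]; ring
      have hh2 : (∫ t in ξ..(ξ + l), bandInd g c δ t) ≤ (ε₂/4) * l := hband ξ
      have hh3 : (∫ t in ξ..(ξ + l), bandInd g c δ (t + τ)) ≤ (ε₂/4) * l := by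
        have hcomp : (∫ t in ξ..(ξ + l), bandInd g c δ (t + τ))
            = ∫ t in (ξ + τ)..(ξ + τ + l), bandInd g c δ t := by
          rw [intervalIntegral.integral_comp_add_right]
          congr 1
          ring
        rw [hcomp]
        exact hband (ξ + τ)
      calc (∫ t in ξ..(ξ + l), |χ t - χ (t + τ)|) ≤ _ := hint
      _ = _ := hsplit
      _ ≤ (ε₂/8) * l + ((ε₂/4) * l + (ε₂/4) * l) := add_le_add hh1 (add_le_add hh2 hh3)
      _ ≤ (3*ε₂/4) * l := by nlinarith [hlpos.le, hε₂.le]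
    refine ⟨l, hlpos, Stmt11Aux.relDense_mono ?_ ⟨L, hLpos, hL⟩⟩
    intro τ hτ
    have hbd : ∀ ξ : ℝ, (1 / l) * (∫ t in ξ..(ξ + l), |χ t - χ (t + τ)|) ≤ 3*ε₂/4 := by
      intro ξ
      rw [div_mul_eq_mul_div, one_mul, div_le_iff₀ hlpos]
      calc (∫ t in ξ..(ξ + l), |χ t - χ (t + τ)|) ≤ (3*ε₂/4) * l := hmain τ hτ ξ
      _ = 3*ε₂/4 * l := by ring
    have hfin : (⨆ ξ : ℝ, (1 / l) * ∫ t in ξ..(ξ + l), |χ t - χ (t + τ)|) ≤ 3*ε₂/4 :=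
      Real.iSup_le hbd (by positivity)
    exact lt_of_le_of_lt hfin (by linarith)
  · -- f < a + ε on T
    rintro t ⟨hgt, htN⟩
    rw [hNsub t htN]
    exact lt_trans hgt hca
  · -- a < f a.e. off T
    filter_upwards [hNae] with t htN htT
    have hgc : ¬ g t < c := fun h => htT ⟨h, htN⟩
    rw [not_lt] at hgc
    rw [hNsub t htN]
    linarith
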